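/- For n = 751530 = 2 · 3 · 5 · 13 · 41 · 47, the sum of divisors σ(n³) is a perfect square. -/

import Mathlib

open ArithmeticFunction
open scoped ArithmeticFunction.sigma

lemma sig_pp (p : ℕ) (hp : p.Prime) : σ 1 (p ^ 3) = 1 + p + p^2 + p^3 := by
  rw [sigma_one_apply_prime_pow hp]
  simp [Finset.sum_range_succ]

lemma sig_mul {m n : ℕ} (h : Nat.Coprime m n) : σ 1 (m * n) = σ 1 m * σ 1 n :=
  isMultiplicative_sigma.map_mul_of_coprime h

theorem fermat_challenge_cube :
    (751530 : ℕ) = 2 * 3 * 5 * 13 * 41 * 47 ∧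
    IsSquare (ArithmeticFunction.sigma 1 (751530 ^ 3)) := by
  refine ⟨by norm_num, ⟨1292054400, ?_⟩⟩
  have h : (751530 : ℕ) ^ 3 = 2^3 * (3^3 * (5^3 * (13^3 * (41^3 * 47^3)))) := by norm_num
  rw [h, sig_mul (by norm_num), sig_mul (by norm_num), sig_mul (by norm_num),
    sig_mul (by norm_num), sig_mul (by norm_num),
    sig_pp 2 (by norm_num), sig_pp 3 (by norm_num), sig_pp 5 (by norm_num),
    sig_pp 13 (by norm_num), sig_pp 41 (by norm_num), sig_pp 47 (by norm_num)]
  norm_num
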